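/- There exist 106 points lying in a closed equilateral triangle of side length 1 in the Euclidean plane such that every two distinct points among them are at distance at least 0.074298299906302. -/

import Mathlib

namespace Packing106

set_option maxRecDepth 100000
set_option maxHeartbeats 8000000

def xs : Array Int := #[0, 7429829990630253, 14859659981260506, 22289489971890759, 29719319962521011, 37149149953151264, 44578979943781517, 52008809934411770, 59438639925042023, 66868469915672276, 74298299906302529, 81728129896932782, 89157959887563034, 100000000000000000, 3714914995315126, 11144744985945379, 18574574976575632, 26004404967205885, 33434234957836138, 40864064948466391, 48293894939096644, 55723724929726896, 63153554920357149, 70583384910987402, 78013214901617655, 87049666253571859, 94578979943781517, 7429829990630253, 14859659981260506, 22289489971890759, 29719319962521011, 37149149953151264, 44578979943781517, 52008809934411770, 59438639925042023, 66868469915672276, 74298299906302529, 81728129896932782, 87551017517966068, 11144744985945379, 18574574976575632, 26004404967205885, 33434234957836138, 40864064948466391, 48293894939096644, 55723724929726896, 63153554920357149, 70583384910987402, 78722155050973990, 85744876989115051, 14859659981260506, 22289489971890759, 29719319962521011, 37149149953151264, 44578979943781517, 52008809934411770, 59438639925042023, 66868469915672276, 74298299906302529, 80450534988479180, 18574574976575632,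 26004404967205885, 33434234957836138, 40864064948466391, 48293894939096644, 55723724929726896, 63153554920357149, 71072394697449280, 78583369121384717, 22289489971890759, 29719319962521011, 37149149953151264, 44578979943781517, 52008809934411770, 59438639925042023, 66868469915672276, 73302891433357573, 26004404967205885, 33434234957836138, 40864064948466391, 48293894939096644, 55723724929726896, 63549219706275520, 71416630878615283, 29719319962521011, 37149149953151264, 44578979943781517, 52008809934411770, 59438639925042023, 66122288877979412, 33434234957836138, 40864064948466391, 48293894939096644, 55999918744802370, 64255123010884949, 37149149953151264, 44578979943781517, 52008809934411770, 58916785376464006, 40864064948466391, 48818899242766730, 57110644847612989, 44578979943781517, 51689624791394506, 50000000000000000, 92889355152387011]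

def qs : Array Int := #[0, 0, 0, 0, 0, 0, 0, 0, 0, 0, 0, 0, 0, 0, 3714914995315126, 3714914995315126, 3714914995315126, 3714914995315126, 3714914995315126, 3714914995315126, 3714914995315126, 3714914995315126, 3714914995315126, 3714914995315126, 3714914995315126, 4250455449089777, 2933423213002498, 7429829990630253, 7429829990630253, 7429829990630253, 7429829990630253, 7429829990630253, 7429829990630253, 7429829990630253, 7429829990630253, 7429829990630253, 7429829990630253, 7429829990630253, 10094184411653981, 11144744985945379, 11144744985945379, 11144744985945379, 11144744985945379, 11144744985945379, 11144744985945379, 11144744985945379, 11144744985945379, 11144744985945379, 11382101219051419, 14255123010884949, 14859659981260506, 14859659981260506, 14859659981260506, 14859659981260506, 14859659981260506, 14859659981260506, 14859659981260506, 14859659981260506, 14859659981260506, 17264680922493215, 18574574976575632, 18574574976575632, 18574574976575632, 18574574976575632, 18574574976575632, 18574574976575632, 18574574976575632, 18739333813752900, 21416630878615283, 22289489971890759, 22289489971890759, 22289489971890759, 22289489971890759, 22289489971890759, 22289489971890759, 22289489971890759, 24434297144452524, 26004404967205885, 26004404967205885, 26004404967205885, 26004404967205885, 26004404967205885, 26138369638717175,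 28583369121384717, 29719319962521011, 29719319962521011, 29719319962521011, 29719319962521011, 29719319962521011, 31592927032992983, 33434234957836138, 33434234957836138, 33434234957836138, 33530436807811179, 35744876989115051, 37149149953151264, 37149149953151264, 37149149953151264, 38728416553156043, 40864064948466391, 41048520004048258, 42889355152387011, 44578979943781517, 45822778365389509, 50000000000000000, 7110644847612989]

def X (i : Fin 106) : ℤ := xs[(i : ℕ)]!
def Q (i : Fin 106) : ℤ := qs[(i : ℕ)]!

theorem hpair : ∀ i j : Fin 106, i ≠ j →
    (74298299906302:ℤ)^2 * (10^17)^2 ≤ 10^30 * ((X i - X j)^2 + 3*(Q i - Q j)^2) := by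
  decide

theorem hmem : ∀ i : Fin 106, 0 ≤ Q i ∧ Q i ≤ X i ∧ X i + Q i ≤ 10^17 := by decide

noncomputable def pt (x q : ℝ) : EuclideanSpace ℝ (Fin 2) := !₂[x, Real.sqrt 3 * q]

noncomputable def A : EuclideanSpace ℝ (Fin 2) := !₂[0, 0]
noncomputable def B : EuclideanSpace ℝ (Fin 2) := !₂[1, 0]
noncomputable def C : EuclideanSpace ℝ (Fin 2) := !₂[1/2, Real.sqrt 3/2]

lemma h3 : Real.sqrt 3 ^ 2 = 3 := Real.sq_sqrt (by norm_num)

lemma dist_pt (x q x' q' : ℝ) :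
    dist (pt x q) (pt x' q') = Real.sqrt ((x - x')^2 + 3*(q - q')^2) := by
  rw [EuclideanSpace.dist_eq, Fin.sum_univ_two]
  congr 1
  simp only [pt, PiLp.toLp_apply, Matrix.cons_val_zero, Matrix.cons_val_one, Matrix.head_cons, Real.dist_eq,
    sq_abs]
  linear_combination (q - q')^2 * h3

lemma pair_real (x q x' q' : ℤ)
    (h : (74298299906302:ℤ)^2 * (10^17)^2 ≤ 10^30 * ((x - x')^2 + 3*(q - q')^2)) :
    (0.074298299906302 : ℝ) ≤ dist (pt ((x:ℝ)/10^17) ((q:ℝ)/10^17)) (pt ((x':ℝ)/10^17) ((q':ℝ)/10^17)) := by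
  rw [dist_pt]
  apply Real.le_sqrt_of_sq_le
  have hc : ((74298299906302:ℝ))^2 * (10^17)^2 ≤ 10^30 * (((x:ℝ) - x')^2 + 3*((q:ℝ) - q')^2) := by
    exact_mod_cast h
  have ht : (0.074298299906302 : ℝ) = 74298299906302 / 10^15 := by norm_num
  rw [ht, div_pow]
  rw [div_le_iff₀ (by positivity)]
  nlinarith [hc]

lemma mem_tri (x q : ℝ) (h0 : 0 ≤ q) (h1 : q ≤ x) (h2 : x + q ≤ 1) :
    pt x q ∈ convexHull ℝ ({A, B, C} :
      Set (EuclideanSpace ℝ (Fin 2))) := by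
  have hco := (convex_convexHull ℝ ({A, B, C} :
      Set (EuclideanSpace ℝ (Fin 2))))
  have key := hco.sum_mem (t := Finset.univ) (w := ![1 - x - q, x - q, 2*q])
    (z := ![!₂[0,0], !₂[1,0], !₂[1/2, Real.sqrt 3/2]])
    (by intro i _; fin_cases i <;> simp <;> linarith)
    (by rw [Fin.sum_univ_three]; simp; ring)
    (by intro i _; apply subset_convexHull; fin_cases i
        · exact Set.mem_insert _ _
        · exact Set.mem_insert_of_mem _ (Set.mem_insert _ _)
        · exact Set.mem_insert_of_mem _ (Set.mem_insert_of_mem _ rfl))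
  rw [Fin.sum_univ_three] at key
  simp only [Matrix.cons_val_zero, Matrix.cons_val_one, Matrix.head_cons, Matrix.cons_val_two,
    Matrix.tail_cons] at key
  have heq : pt x q = (1 - x - q) • A + (x - q) • B + (2*q) • C := by
    ext j
    fin_cases j <;>
      simp [pt, A, B, C, Matrix.cons_val_zero, Matrix.cons_val_one, Matrix.head_cons] <;> ring
  rwa [heq]

lemma dist01 : dist A B = 1 := by
  rw [A, B]
  rw [EuclideanSpace.dist_eq, Fin.sum_univ_two]
  simp [Real.dist_eq]

lemma dist02 : dist A C = 1 := by
  rw [A, C]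
  rw [EuclideanSpace.dist_eq, Fin.sum_univ_two]
  simp only [PiLp.toLp_apply, Matrix.cons_val_zero, Matrix.cons_val_one, Matrix.head_cons, Real.dist_eq, sq_abs]
  rw [show (0 - 1/2 : ℝ)^2 + (0 - Real.sqrt 3/2)^2 = 1 by nlinarith [h3]]
  exact Real.sqrt_one

lemma dist12 : dist B C = 1 := by
  rw [B, C]
  rw [EuclideanSpace.dist_eq, Fin.sum_univ_two]
  simp only [PiLp.toLp_apply, Matrix.cons_val_zero, Matrix.cons_val_one, Matrix.head_cons, Real.dist_eq, sq_abs]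
  rw [show (1 - 1/2 : ℝ)^2 + (0 - Real.sqrt 3/2)^2 = 1 by nlinarith [h3]]
  exact Real.sqrt_one

end Packing106

/-- **Packing of 106 points in a unit equilateral triangle.**
There exist 106 points lying in a closed equilateral triangle of side length
`1` in the Euclidean plane (the convex hull of three points at pairwise
distance `1`) such that every two distinct points among them are at distance
at least `0.074298299906302`. -/
theorem packing_106 :
    ∃ (a b c : EuclideanSpace ℝ (Fin 2))
      (P : Fin 106 → EuclideanSpace ℝ (Fin 2)),
      dist a b = 1 ∧ dist a c = 1 ∧ dist b c = 1 ∧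
      (∀ i, P i ∈ convexHull ℝ ({a, b, c} : Set (EuclideanSpace ℝ (Fin 2)))) ∧
      (∀ i j, i ≠ j → (0.074298299906302 : ℝ) ≤ dist (P i) (P j)) := by
  refine ⟨Packing106.A, Packing106.B, Packing106.C,
    fun i => Packing106.pt ((Packing106.X i : ℝ)/10^17) ((Packing106.Q i : ℝ)/10^17),
    Packing106.dist01, Packing106.dist02, Packing106.dist12, ?_, ?_⟩
  · intro i
    obtain ⟨h0, h1, h2⟩ := Packing106.hmem i
    apply Packing106.mem_tri
    · positivity
    · apply div_le_div_of_nonneg_right ?_ (by positivity)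
      exact_mod_cast h1
    · rw [← add_div, div_le_one (by positivity)]
      exact_mod_cast h2
  · intro i j hij
    exact Packing106.pair_real _ _ _ _ (Packing106.hpair i j hij)
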